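/- Let μ = Spec ℂ[s²t², s³t³, s⁴, t⁴, s⁵t, st⁵] ⊆ Spec ℂ[s,t]. Then the normalization of the ring ℂ[s²t², s³t³, s⁴, t⁴, s⁵t, st⁵] is ℂ[st, s⁴, t⁴]. Moreover ℂ[st, s⁴, t⁴] ≅ ℂ[x,y,z]/(x⁴ − yz), i.e., Spec of it is a simple surface singularity of type A₃. -/

import Mathlib

open MvPolynomial Complex

noncomputable section
local notation "R2" => MvPolynomial (Fin 2) ℂ

private lemma I_pow_eq_one_iff (n : ℕ) : Complex.I ^ n = 1 ↔ 4 ∣ n := by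
  constructor
  · intro h
    have h4 : Complex.I ^ (4 * (n / 4)) = 1 := by
      rw [pow_mul, Complex.I_pow_four, one_pow]
    have hm : Complex.I ^ (n % 4) = 1 := by
      have := Nat.div_add_mod n 4
      rw [← this, pow_add] at h
      rwa [h4, one_mul] at h
    have hlt : n % 4 < 4 := Nat.mod_lt _ (by norm_num)
    interval_cases h : n % 4
    · omega
    · rw [pow_one] at hm; apply_fun Complex.im at hm; simp at hm
    · rw [Complex.I_sq] at hm; norm_num at hm
    · rw [pow_succ, Complex.I_sq, show (-1 : ℂ) * Complex.I = -Complex.I by ring] at hm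
      apply_fun Complex.im at hm; simp at hm
  · rintro ⟨k, rfl⟩
    rw [pow_mul, Complex.I_pow_four, one_pow]

private lemma monomial_eq_two (m : Fin 2 →₀ ℕ) (r : ℂ) :
    (monomial m r : R2) = C r * X 0 ^ m 0 * X 1 ^ m 1 := by
  rw [monomial_eq, Finsupp.prod_pow, Fin.prod_univ_two, mul_assoc]

private def sc (c : Fin 2 → ℂ) : MvPolynomial (Fin 2) ℂ →ₐ[ℂ] MvPolynomial (Fin 2) ℂ :=
  aeval ![C (c 0) * X 0, C (c 1) * X 1]

private lemma sc_monomial (c : Fin 2 → ℂ) (m : Fin 2 →₀ ℕ) (r : ℂ) :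
    sc c (monomial m r) = monomial m ((c 0 ^ m 0 * c 1 ^ m 1) * r) := by
  rw [sc, aeval_monomial, Finsupp.prod_pow, Fin.prod_univ_two]
  simp only [Matrix.cons_val_zero, Matrix.cons_val_one, Matrix.head_cons]
  rw [monomial_eq_two, mul_pow, mul_pow, ← C_pow, ← C_pow, algebraMap_eq]
  rw [show (C (c 0 ^ m 0 * c 1 ^ m 1 * r) : R2) = C (c 0 ^ m 0) * C (c 1 ^ m 1) * C r by
    rw [← C_mul, ← C_mul]]
  ring

private lemma coeff_sc (c : Fin 2 → ℂ) (p : R2) (m : Fin 2 →₀ ℕ) :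
    coeff m (sc c p) = (c 0 ^ m 0 * c 1 ^ m 1) * coeff m p := by
  conv_lhs => rw [← support_sum_monomial_coeff p]
  rw [map_sum, coeff_sum]
  have h : ∀ m' ∈ p.support, coeff m (sc c (monomial m' (coeff m' p)))
      = if m' = m then (c 0 ^ m' 0 * c 1 ^ m' 1) * coeff m' p else 0 := by
    intro m' _
    rw [sc_monomial, coeff_monomial]
  rw [Finset.sum_congr rfl h,
    Finset.sum_ite_eq' p.support m (fun m' => (c 0 ^ m' 0 * c 1 ^ m' 1) * coeff m' p)]
  by_cases h : m ∈ p.support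
  · simp [h]
  · simp [h, notMem_support_iff.mp h]

private abbrev Bs : Subalgebra ℂ (MvPolynomial (Fin 2) ℂ) :=
  Algebra.adjoin ℂ ({X 0 * X 1, X 0 ^ 4, X 1 ^ 4} : Set (MvPolynomial (Fin 2) ℂ))

private lemma mono_mem (a b : ℕ) (h : 4 ∣ a + 3 * b) : (X 0 ^ a * X 1 ^ b : R2) ∈ Bs := by
  have hu : (X 0 * X 1 : R2) ∈ Bs := Algebra.subset_adjoin (by simp)
  have hy : (X 0 ^ 4 : R2) ∈ Bs := Algebra.subset_adjoin (by simp)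
  have hz : (X 1 ^ 4 : R2) ∈ Bs := Algebra.subset_adjoin (by simp)
  rcases le_total a b with hab | hab
  · obtain ⟨k, hk⟩ : ∃ k, b = a + 4 * k := by
      obtain ⟨k, hk⟩ : 4 ∣ b - a := by omega
      exact ⟨k, by omega⟩
    subst hk
    rw [show (X 0 ^ a * X 1 ^ (a + 4 * k) : R2) = (X 0 * X 1) ^ a * (X 1 ^ 4) ^ k by ring]
    exact mul_mem (pow_mem hu a) (pow_mem hz k)
  · obtain ⟨k, hk⟩ : ∃ k, a = b + 4 * k := by
      obtain ⟨k, hk⟩ : 4 ∣ a - b := by omega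
      exact ⟨k, by omega⟩
    subst hk
    rw [show (X 0 ^ (b + 4 * k) * X 1 ^ b : R2) = (X 0 * X 1) ^ b * (X 0 ^ 4) ^ k by ring]
    exact mul_mem (pow_mem hu b) (pow_mem hy k)

private def τ : MvPolynomial (Fin 2) ℂ →ₐ[ℂ] MvPolynomial (Fin 2) ℂ := sc ![Complex.I, -Complex.I]

private lemma tau_X0 : τ (X 0) = C Complex.I * X 0 := by
  simp [τ, sc, aeval_X]

private lemma tau_X1 : τ (X 1) = C (-Complex.I) * X 1 := by
  simp [τ, sc, aeval_X]

private lemma tau_fixed (b : R2) (hb : b ∈ Bs) : τ b = b := by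
  induction hb using Algebra.adjoin_induction with
  | mem x hx =>
    rcases hx with h | h | h
    · subst h
      rw [map_mul, tau_X0, tau_X1]
      rw [show (C Complex.I * X 0) * (C (-Complex.I) * X 1)
          = (C Complex.I * C (-Complex.I)) * (X 0 * X 1 : R2) by ring,
        ← C_mul]
      norm_num [Complex.I_mul_I]
    · subst h
      rw [map_pow, tau_X0, mul_pow, ← C_pow, Complex.I_pow_four, C_1, one_mul]
    · rw [Set.mem_singleton_iff] at h
      subst h
      rw [map_pow, tau_X1, mul_pow, ← C_pow]
      rw [show ((-Complex.I) ^ 4 : ℂ) = 1 by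
        rw [show ((-Complex.I) ^ 4 : ℂ) = Complex.I ^ 4 by ring, Complex.I_pow_four]]
      rw [C_1, one_mul]
  | algebraMap r => exact aeval_C _ r
  | add x y _ _ hx hy => rw [map_add, hx, hy]
  | mul x y _ _ hx hy => rw [map_mul, hx, hy]

private lemma fix_mem (p : R2) (h : τ p = p) : p ∈ Bs := by
  rw [← support_sum_monomial_coeff p]
  refine Subalgebra.sum_mem _ (fun m hm => ?_)
  have hc : coeff m p ≠ 0 := mem_support_iff.mp hm
  have hchi : Complex.I ^ m 0 * (-Complex.I) ^ m 1 = 1 := by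
    have h1 := coeff_sc ![Complex.I, -Complex.I] p m
    rw [show sc ![Complex.I, -Complex.I] = τ from rfl, h] at h1
    simp only [Matrix.cons_val_zero, Matrix.cons_val_one, Matrix.head_cons] at h1
    have h2 : (Complex.I ^ m 0 * (-Complex.I) ^ m 1 - 1) * coeff m p = 0 := by
      linear_combination -h1
    rcases mul_eq_zero.mp h2 with h3 | h3
    · exact sub_eq_zero.mp h3
    · exact absurd h3 hc
  have hdvd : 4 ∣ m 0 + 3 * m 1 := by
    rw [← I_pow_eq_one_iff]
    rw [show (-Complex.I) = Complex.I ^ 3 by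
      rw [pow_succ, Complex.I_sq]; ring] at hchi
    rw [← pow_mul, ← pow_add] at hchi
    exact hchi
  rw [monomial_eq_two, mul_assoc]
  have hC : (C (coeff m p) : R2) ∈ Bs := by
    rw [← algebraMap_eq]; exact Subalgebra.algebraMap_mem _ _
  exact mul_mem hC (mono_mem (m 0) (m 1) hdvd)

set_option maxHeartbeats 1000000
set_option synthInstance.maxHeartbeats 400000
private lemma Bs_integrallyClosed : IsIntegrallyClosed ↥Bs := by
  rw [isIntegrallyClosed_iff (FractionRing ↥Bs)]
  intro x hx
  have hBL : ∀ b : ↥Bs, algebraMap ↥Bs (FractionRing R2) b = algebraMap R2 (FractionRing R2) (b : R2) :=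
    fun b => IsScalarTower.algebraMap_apply ↥Bs R2 (FractionRing R2) b
  have hinj : Function.Injective (algebraMap ↥Bs (FractionRing R2)) := by
    intro a b hab
    rw [hBL, hBL] at hab
    exact Subtype.ext (IsFractionRing.injective R2 (FractionRing R2) hab)
  have hunit : ∀ (y : nonZeroDivisors ↥Bs), IsUnit ((algebraMap ↥Bs (FractionRing R2)) (y : ↥Bs)) := by
    intro y
    rw [isUnit_iff_ne_zero]
    intro h0
    exact nonZeroDivisors.ne_zero y.2 (hinj (by rw [h0, map_zero]))
  set j : FractionRing ↥Bs →+* FractionRing R2 := IsLocalization.lift hunit with hj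
  have jcomm : ∀ b : ↥Bs, j (algebraMap ↥Bs (FractionRing ↥Bs) b) = algebraMap ↥Bs (FractionRing R2) b :=
    fun b => IsLocalization.lift_eq hunit b
  have jinj : Function.Injective j := j.injective
  -- ξ := j x is integral over Bs, hence over R2
  obtain ⟨P, hPmonic, hPeval⟩ := hx
  have hint : IsIntegral ↥Bs (j x) := by
    refine ⟨P, hPmonic, ?_⟩
    have hcomp : j.comp (algebraMap ↥Bs (FractionRing ↥Bs)) = algebraMap ↥Bs (FractionRing R2) :=
      RingHom.ext jcomm
    have h5 := Polynomial.hom_eval₂ P (algebraMap ↥Bs (FractionRing ↥Bs)) j x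
    rw [hPeval, map_zero, hcomp] at h5
    exact h5.symm
  have hint2 : IsIntegral R2 (j x) := IsIntegral.tower_top hint
  obtain ⟨p2, hp2⟩ := IsIntegrallyClosed.isIntegral_iff.mp hint2
  -- x = f / g
  obtain ⟨⟨f, g⟩, hfg⟩ := IsLocalization.mk'_surjective (nonZeroDivisors ↥Bs) x
  have hspec : x * algebraMap ↥Bs (FractionRing ↥Bs) (g : ↥Bs) = algebraMap ↥Bs (FractionRing ↥Bs) f := by
    rw [← hfg]; exact IsLocalization.mk'_spec _ f g
  have hkey : ((g : ↥Bs) : R2) * p2 = ((f : ↥Bs) : R2) := by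
    apply IsFractionRing.injective R2 (FractionRing R2)
    have := congrArg j hspec
    rw [map_mul, jcomm, jcomm, hBL, hBL] at this
    rw [map_mul, hp2]
    rw [mul_comm] at this
    exact this
  -- τ fixes p2
  have hgz : ((g : ↥Bs) : R2) ≠ 0 := by
    intro h0
    exact nonZeroDivisors.ne_zero g.2 (Subtype.ext h0)
  have htau : τ p2 = p2 := by
    have h1 : τ (((g : ↥Bs) : R2) * p2) = ((g : ↥Bs) : R2) * p2 := by
      rw [hkey]
      exact tau_fixed _ (f : ↥Bs).2
    rw [map_mul, tau_fixed _ (g : ↥Bs).2] at h1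
    exact mul_left_cancel₀ hgz h1
  have hmem : p2 ∈ Bs := fix_mem p2 htau
  refine ⟨⟨p2, hmem⟩, ?_⟩
  apply jinj
  rw [jcomm, hBL, hp2]

private abbrev As : Subalgebra ℂ (MvPolynomial (Fin 2) ℂ) :=
  Algebra.adjoin ℂ ({X 0 ^ 2 * X 1 ^ 2, X 0 ^ 3 * X 1 ^ 3, X 0 ^ 4, X 1 ^ 4,
    X 0 ^ 5 * X 1, X 0 * X 1 ^ 5} : Set (MvPolynomial (Fin 2) ℂ))

private lemma As_le_Bs : As ≤ Bs := by
  apply Algebra.adjoin_le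
  intro x hx
  have hu : (X 0 * X 1 : R2) ∈ Bs := Algebra.subset_adjoin (by simp)
  have hy : (X 0 ^ 4 : R2) ∈ Bs := Algebra.subset_adjoin (by simp)
  have hz : (X 1 ^ 4 : R2) ∈ Bs := Algebra.subset_adjoin (by simp)
  simp only [Set.mem_insert_iff, Set.mem_singleton_iff] at hx
  rcases hx with h | h | h | h | h | h <;> subst h
  · rw [show (X 0 ^ 2 * X 1 ^ 2 : R2) = (X 0 * X 1) ^ 2 by ring]; exact pow_mem hu 2
  · rw [show (X 0 ^ 3 * X 1 ^ 3 : R2) = (X 0 * X 1) ^ 3 by ring]; exact pow_mem hu 3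
  · exact hy
  · exact hz
  · rw [show (X 0 ^ 5 * X 1 : R2) = (X 0 * X 1) * X 0 ^ 4 by ring]; exact mul_mem hu hy
  · rw [show (X 0 * X 1 ^ 5 : R2) = (X 0 * X 1) * X 1 ^ 4 by ring]; exact mul_mem hu hz

private lemma frac_prop (b : R2) (hb : b ∈ Bs) : ∃ p ∈ As, ∃ q ∈ As, q ≠ 0 ∧ q * b = p := by
  have h22 : (X 0 ^ 2 * X 1 ^ 2 : R2) ∈ As := Algebra.subset_adjoin (by simp)
  have h33 : (X 0 ^ 3 * X 1 ^ 3 : R2) ∈ As := Algebra.subset_adjoin (by simp)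
  have h40 : (X 0 ^ 4 : R2) ∈ As := Algebra.subset_adjoin (by simp)
  have h04 : (X 1 ^ 4 : R2) ∈ As := Algebra.subset_adjoin (by simp)
  have hne : (X 0 ^ 2 * X 1 ^ 2 : R2) ≠ 0 :=
    mul_ne_zero (pow_ne_zero _ (X_ne_zero 0)) (pow_ne_zero _ (X_ne_zero 1))
  induction hb using Algebra.adjoin_induction with
  | mem x hx =>
    simp only [Set.mem_insert_iff, Set.mem_singleton_iff] at hx
    rcases hx with h | h | h <;> subst h
    · exact ⟨X 0 ^ 3 * X 1 ^ 3, h33, X 0 ^ 2 * X 1 ^ 2, h22, hne, by ring⟩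
    · exact ⟨X 0 ^ 4, h40, 1, one_mem _, one_ne_zero, one_mul _⟩
    · exact ⟨X 1 ^ 4, h04, 1, one_mem _, one_ne_zero, one_mul _⟩
  | algebraMap r =>
    exact ⟨algebraMap ℂ R2 r, Subalgebra.algebraMap_mem _ _, 1, one_mem _, one_ne_zero, one_mul _⟩
  | add x y hx hy ihx ihy =>
    obtain ⟨p1, hp1, q1, hq1, hq1z, he1⟩ := ihx
    obtain ⟨p2, hp2, q2, hq2, hq2z, he2⟩ := ihy
    exact ⟨q2 * p1 + q1 * p2, add_mem (mul_mem hq2 hp1) (mul_mem hq1 hp2),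
      q1 * q2, mul_mem hq1 hq2, mul_ne_zero hq1z hq2z,
      by linear_combination q2 * he1 + q1 * he2⟩
  | mul x y hx hy ihx ihy =>
    obtain ⟨p1, hp1, q1, hq1, hq1z, he1⟩ := ihx
    obtain ⟨p2, hp2, q2, hq2, hq2z, he2⟩ := ihy
    exact ⟨p1 * p2, mul_mem hp1 hp2, q1 * q2, mul_mem hq1 hq2, mul_ne_zero hq1z hq2z,
      by linear_combination (q2 * y) * he1 + p1 * he2⟩

private lemma integral_prop (b : R2) (hb : b ∈ Bs) : IsIntegral As b := by
  have h22 : (X 0 ^ 2 * X 1 ^ 2 : R2) ∈ As := Algebra.subset_adjoin (by simp)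
  have h40 : (X 0 ^ 4 : R2) ∈ As := Algebra.subset_adjoin (by simp)
  have h04 : (X 1 ^ 4 : R2) ∈ As := Algebra.subset_adjoin (by simp)
  induction hb using Algebra.adjoin_induction with
  | mem x hx =>
    simp only [Set.mem_insert_iff, Set.mem_singleton_iff] at hx
    rcases hx with h | h | h <;> subst h
    · refine ⟨Polynomial.X ^ 2 - Polynomial.C (⟨X 0 ^ 2 * X 1 ^ 2, h22⟩ : ↥As),
        Polynomial.monic_X_pow_sub_C _ two_ne_zero, ?_⟩
      simp only [Polynomial.eval₂_sub, Polynomial.eval₂_pow, Polynomial.eval₂_X,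
        Polynomial.eval₂_C]
      rw [show algebraMap ↥As R2 ⟨X 0 ^ 2 * X 1 ^ 2, h22⟩ = X 0 ^ 2 * X 1 ^ 2 from rfl]
      ring
    · have : IsIntegral ↥As (algebraMap ↥As R2 ⟨X 0 ^ 4, h40⟩) := isIntegral_algebraMap
      exact this
    · have : IsIntegral ↥As (algebraMap ↥As R2 ⟨X 1 ^ 4, h04⟩) := isIntegral_algebraMap
      exact this
  | algebraMap r =>
    have : IsIntegral ↥As (algebraMap ↥As R2 ⟨algebraMap ℂ R2 r, Subalgebra.algebraMap_mem _ _⟩) :=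
      isIntegral_algebraMap
    exact this
  | add x y hx hy ihx ihy => exact IsIntegral.add ihx ihy
  | mul x y hx hy ihx ihy => exact IsIntegral.mul ihx ihy

def ψ : MvPolynomial (Fin 2) ℂ →ₐ[ℂ] MvPolynomial (Fin 2) ℂ := aeval ![X 0 ^ 4, X 1 ^ 4]

lemma psi_monomial (m : Fin 2 →₀ ℕ) (r : ℂ) :
    ψ (monomial m r) = monomial (4 • m) r := by
  rw [ψ, aeval_monomial, Finsupp.prod_pow, Fin.prod_univ_two]
  simp only [Matrix.cons_val_zero, Matrix.cons_val_one, Matrix.head_cons]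
  rw [monomial_eq_two]
  rw [Finsupp.smul_apply, Finsupp.smul_apply, smul_eq_mul, smul_eq_mul, algebraMap_eq,
    ← pow_mul, ← pow_mul]
  ring

lemma smul4_inj (m m' : Fin 2 →₀ ℕ) (h : 4 • m = 4 • m') : m = m' := by
  ext i
  have := congrArg (fun f => f i) h
  simp only [Finsupp.smul_apply, smul_eq_mul] at this
  omega

lemma coeff_psi_smul (q : R2) (m : Fin 2 →₀ ℕ) : coeff (4 • m) (ψ q) = coeff m q := by
  conv_lhs => rw [← support_sum_monomial_coeff q]
  rw [map_sum, coeff_sum]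
  have h : ∀ m' ∈ q.support, coeff (4 • m) (ψ (monomial m' (coeff m' q)))
      = if m' = m then coeff m' q else 0 := by
    intro m' _
    rw [psi_monomial, coeff_monomial]
    by_cases he : m' = m
    · simp [he]
    · rw [if_neg he, if_neg (fun hc => he (smul4_inj _ _ hc))]
  rw [Finset.sum_congr rfl h, Finset.sum_ite_eq' q.support m (fun m' => coeff m' q)]
  by_cases h : m ∈ q.support
  · simp [h]
  · simp [h, notMem_support_iff.mp h]

lemma coeff_psi_zero (q : R2) (N : Fin 2 →₀ ℕ) (h : ¬ (4 ∣ N 0)) : coeff N (ψ q) = 0 := by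
  conv_lhs => rw [← support_sum_monomial_coeff q]
  rw [map_sum, coeff_sum]
  apply Finset.sum_eq_zero
  intro m' _
  rw [psi_monomial, coeff_monomial, if_neg]
  intro hc
  apply h
  rw [← hc, Finsupp.smul_apply, smul_eq_mul]
  exact ⟨m' 0, rfl⟩

def d11 : Fin 2 →₀ ℕ := Finsupp.single 0 1 + Finsupp.single 1 1

lemma X01_eq : (X 0 * X 1 : R2) = monomial d11 1 := by
  rw [d11, X, X, monomial_mul, one_mul]

lemma key_inj (F : Polynomial (MvPolynomial (Fin 2) ℂ)) (hdeg : F.degree < 4)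
    (h : Polynomial.eval₂ (ψ : MvPolynomial (Fin 2) ℂ →ₐ[ℂ] MvPolynomial (Fin 2) ℂ).toRingHom
      (X 0 * X 1) F = 0) : F = 0 := by
  ext j m
  rw [Polynomial.coeff_zero, coeff_zero]
  by_cases hj : j < 4
  swap
  · rw [Polynomial.coeff_eq_zero_of_degree_lt (lt_of_lt_of_le hdeg (by exact_mod_cast not_lt.mp hj)),
      coeff_zero]
  set M : Fin 2 →₀ ℕ := 4 • m + j • d11 with hM
  have h0 : coeff M (Polynomial.eval₂ ψ.toRingHom (X 0 * X 1) F) = 0 := by rw [h, coeff_zero]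
  rw [Polynomial.eval₂_eq_sum, Polynomial.sum, coeff_sum] at h0
  have hco : ∀ y, ψ.toRingHom y = ψ y := fun _ => rfl
  simp only [hco] at h0
  have hterm : ∀ e ∈ F.support, coeff M (ψ (F.coeff e) * (X 0 * X 1) ^ e)
      = if e = j then coeff m (F.coeff j) else 0 := by
    intro e he
    have hedeg : e < 4 := by
      by_contra hc
      exact (Polynomial.mem_support_iff.mp he)
        (Polynomial.coeff_eq_zero_of_degree_lt (lt_of_lt_of_le hdeg (by exact_mod_cast not_lt.mp hc)))
    rw [X01_eq, monomial_pow, one_pow, coeff_mul_monomial']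
    by_cases hej : e = j
    · subst hej
      rw [if_pos (by
        intro i
        simp only [hM, Finsupp.add_apply, Finsupp.smul_apply, smul_eq_mul]
        omega), if_pos rfl]
      rw [show M - e • d11 = 4 • m by
        ext i
        simp only [hM, Finsupp.tsub_apply, Finsupp.add_apply, Finsupp.smul_apply, smul_eq_mul]
        omega]
      rw [coeff_psi_smul, mul_one]
    · rw [if_neg hej]
      by_cases hle : e • d11 ≤ M
      · rw [if_pos hle, coeff_psi_zero, zero_mul]
        have hd0 : d11 0 = 1 := by simp [d11]
        have hMle := hle 0
        simp only [hM, Finsupp.tsub_apply, Finsupp.add_apply, Finsupp.smul_apply, smul_eq_mul,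
          hd0, mul_one] at hMle ⊢
        omega
      · rw [if_neg hle]
  rw [Finset.sum_congr rfl hterm, Finset.sum_ite_eq' F.support j
    (fun _ => coeff m (F.coeff j))] at h0
  by_cases hs : j ∈ F.support
  · rwa [if_pos hs] at h0
  · rw [Polynomial.notMem_support_iff.mp hs, coeff_zero]

local notation "R3" => MvPolynomial (Fin 3) ℂ

def φ0 : MvPolynomial (Fin 3) ℂ →ₐ[ℂ] MvPolynomial (Fin 2) ℂ :=
  aeval ![X 0 * X 1, X 0 ^ 4, X 1 ^ 4]

lemma phi0_X0 : φ0 (X 0) = X 0 * X 1 := by simp [φ0]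
lemma phi0_X1 : φ0 (X 1) = X 0 ^ 4 := by simp [φ0]
lemma phi0_X2 : φ0 (X 2) = X 1 ^ 4 := by simp [φ0]

lemma phi0_range : φ0.range = Bs := by
  rw [φ0, ← Algebra.adjoin_range_eq_range_aeval]
  congr 1
  ext x
  constructor
  · rintro ⟨i, rfl⟩
    fin_cases i <;> simp
  · intro hx
    simp only [Set.mem_insert_iff, Set.mem_singleton_iff] at hx
    rcases hx with h | h | h
    · exact ⟨0, h.symm⟩
    · exact ⟨1, h.symm⟩
    · exact ⟨2, h.symm⟩

-- the E equivalence
def EE : MvPolynomial (Fin 3) ℂ ≃ₐ[ℂ] Polynomial (MvPolynomial (Fin 2) ℂ) :=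
  MvPolynomial.finSuccEquiv ℂ 2

lemma EE_symm_X : EE.symm Polynomial.X = X 0 := by
  rw [← finSuccEquiv_X_zero (R := ℂ) (n := 2)]; exact EE.symm_apply_apply _

lemma EE_symm_C (i : Fin 2) : EE.symm (Polynomial.C (X i)) = X i.succ := by
  rw [← finSuccEquiv_X_succ (R := ℂ) (n := 2) (j := i)]; exact EE.symm_apply_apply _

lemma EE_symm_CC (c : ℂ) : EE.symm (Polynomial.C (C c)) = C c := by
  have h : EE (C c : R3) = Polynomial.C (C c) := by
    rw [EE]
    simp [finSuccEquiv_apply]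
  rw [← h]; exact EE.symm_apply_apply _

-- the composite Φ = φ0 ∘ EE.symm equals eval₂ ψ (X0 X1)
lemma comp_eval (F : Polynomial (MvPolynomial (Fin 2) ℂ)) :
    φ0 (EE.symm F) = Polynomial.eval₂ ψ.toRingHom (X 0 * X 1) F := by
  have hh : (φ0.toRingHom.comp ((EE.symm : Polynomial (MvPolynomial (Fin 2) ℂ) ≃ₐ[ℂ] R3).toAlgHom.toRingHom.comp
      (Polynomial.C : MvPolynomial (Fin 2) ℂ →+* Polynomial (MvPolynomial (Fin 2) ℂ)))) = ψ.toRingHom := by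
    apply MvPolynomial.ringHom_ext
    · intro r
      show φ0 (EE.symm (Polynomial.C (C r))) = ψ (C r)
      rw [EE_symm_CC]
      simp [φ0, ψ]
    · intro i
      show φ0 (EE.symm (Polynomial.C (X i))) = ψ (X i)
      rw [EE_symm_C]
      have hψ : ψ (X i) = ![(X 0 : R2) ^ 4, X 1 ^ 4] i := aeval_X _ i
      have hφ : φ0 (X i.succ) = ![(X 0 : R2) * X 1, X 0 ^ 4, X 1 ^ 4] i.succ := aeval_X _ _
      rw [hψ, hφ]
      fin_cases i <;> rfl
  have hhom : (φ0.toRingHom.comp (EE.symm : Polynomial (MvPolynomial (Fin 2) ℂ) ≃ₐ[ℂ] R3).toAlgHom.toRingHom)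
      = Polynomial.eval₂RingHom ψ.toRingHom (X 0 * X 1) := by
    apply Polynomial.ringHom_ext
    · intro q
      show φ0 (EE.symm (Polynomial.C q)) = Polynomial.eval₂ ψ.toRingHom (X 0 * X 1) (Polynomial.C q)
      rw [Polynomial.eval₂_C]
      exact RingHom.congr_fun hh q
    · show φ0 (EE.symm Polynomial.X) = Polynomial.eval₂ ψ.toRingHom (X 0 * X 1) Polynomial.X
      rw [Polynomial.eval₂_X, EE_symm_X, phi0_X0]
  exact RingHom.congr_fun hhom F

lemma phi0_rel : φ0 ((X 0 : R3) ^ 4 - X 1 * X 2) = 0 := by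
  rw [map_sub, map_pow, map_mul, phi0_X0, phi0_X1, phi0_X2]; ring

lemma phi0_ker : RingHom.ker φ0.toRingHom = Ideal.span {(X 0 : R3) ^ 4 - X 1 * X 2} := by
  ext p
  rw [RingHom.mem_ker]
  constructor
  · intro hp
    set d : Polynomial (MvPolynomial (Fin 2) ℂ) := Polynomial.X ^ 4 - Polynomial.C (X 0 * X 1) with hd
    have hdmonic : d.Monic := Polynomial.monic_X_pow_sub_C _ (by norm_num)
    have hEsd : EE.symm d = (X 0 : R3) ^ 4 - X 1 * X 2 := by
      rw [hd, map_sub, map_pow, EE_symm_X]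
      congr 1
      rw [show (Polynomial.C (X 0 * X 1 : MvPolynomial (Fin 2) ℂ))
          = Polynomial.C (X 0) * Polynomial.C (X 1) by rw [← map_mul]]
      rw [map_mul, EE_symm_C 0, EE_symm_C 1]
      rfl
    have hsplit : p = EE.symm (EE p %ₘ d) + ((X 0 : R3) ^ 4 - X 1 * X 2) * EE.symm (EE p /ₘ d) := by
      conv_lhs => rw [← EE.symm_apply_apply p]
      rw [← hEsd, ← map_mul, ← map_add, Polynomial.modByMonic_add_div (EE p) d]
    have hr0 : EE.symm (EE p %ₘ d) = 0 := by
      have h1 : φ0 (EE.symm (EE p %ₘ d)) = 0 := by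
        have h2 := congrArg φ0 hsplit
        rw [show φ0 p = 0 from hp, map_add, map_mul, phi0_rel, zero_mul, add_zero] at h2
        exact h2.symm
      rw [comp_eval] at h1
      have hdeg : (EE p %ₘ d).degree < 4 := by
        have h3 := Polynomial.degree_modByMonic_lt (EE p) hdmonic
        rw [hd, Polynomial.degree_X_pow_sub_C (by norm_num)] at h3
        exact_mod_cast h3
      rw [key_inj _ hdeg h1, map_zero]
    rw [hsplit, hr0, zero_add]
    exact Ideal.mem_span_singleton.mpr ⟨EE.symm (EE p /ₘ d), rfl⟩
  · intro hp
    obtain ⟨c, rfl⟩ := Ideal.mem_span_singleton.mp hp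
    show φ0 _ = 0
    rw [map_mul, phi0_rel, zero_mul]

def φB : MvPolynomial (Fin 3) ℂ →ₐ[ℂ] ↥Bs :=
  φ0.codRestrict Bs (fun x => by rw [← phi0_range]; exact ⟨x, rfl⟩)

lemma φB_surj : Function.Surjective φB := by
  intro b
  have hb : (b : MvPolynomial (Fin 2) ℂ) ∈ φ0.range := by rw [phi0_range]; exact b.2
  obtain ⟨x, hx⟩ := hb
  exact ⟨x, Subtype.ext hx⟩

lemma ker_φB : Ideal.span {(X 0 : R3) ^ 4 - X 1 * X 2} = RingHom.ker φB := by
  rw [← phi0_ker]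
  ext x
  rw [RingHom.mem_ker, RingHom.mem_ker]
  constructor
  · intro h
    exact Subtype.ext h
  · intro h
    exact congrArg Subtype.val h

noncomputable def eIso : (MvPolynomial (Fin 3) ℂ ⧸
    Ideal.span {(X 0 : MvPolynomial (Fin 3) ℂ) ^ 4 - X 1 * X 2}) ≃ₐ[ℂ] ↥Bs :=
  (Ideal.quotientEquivAlgOfEq ℂ ker_φB).trans (Ideal.quotientKerAlgEquivOfSurjective φB_surj)

lemma eIso_mk (x : MvPolynomial (Fin 3) ℂ) :
    ((eIso (Ideal.Quotient.mk _ x) : ↥Bs) : MvPolynomial (Fin 2) ℂ) = φ0 x := by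
  rw [eIso, AlgEquiv.trans_apply, Ideal.quotientEquivAlgOfEq_mk,
    Ideal.quotientKerAlgEquivOfSurjective_mk]
  rfl

/-- The normalization of `ℂ[s²t², s³t³, s⁴, t⁴, s⁵t, st⁵]` is `ℂ[st, s⁴, t⁴]`, which is
isomorphic to `ℂ[x,y,z]/(x⁴ − yz)` via `x ↦ st`, `y ↦ s⁴`, `z ↦ t⁴`. -/
theorem stmt_11 :
    let s : MvPolynomial (Fin 2) ℂ := X 0
    let t : MvPolynomial (Fin 2) ℂ := X 1
    let A : Subalgebra ℂ (MvPolynomial (Fin 2) ℂ) :=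
      Algebra.adjoin ℂ ({s ^ 2 * t ^ 2, s ^ 3 * t ^ 3, s ^ 4, t ^ 4, s ^ 5 * t, s * t ^ 5} :
        Set (MvPolynomial (Fin 2) ℂ))
    let B : Subalgebra ℂ (MvPolynomial (Fin 2) ℂ) :=
      Algebra.adjoin ℂ ({s * t, s ^ 4, t ^ 4} : Set (MvPolynomial (Fin 2) ℂ))
    A ≤ B ∧
    (∀ b ∈ B, ∃ p ∈ A, ∃ q ∈ A, q ≠ 0 ∧ q * b = p) ∧
    (∀ b ∈ B, IsIntegral A b) ∧
    IsIntegrallyClosed B ∧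
    ∃ e : (MvPolynomial (Fin 3) ℂ ⧸
        Ideal.span {(X 0 : MvPolynomial (Fin 3) ℂ) ^ 4 - X 1 * X 2}) ≃ₐ[ℂ] B,
      (e (Ideal.Quotient.mk _ (X 0)) : MvPolynomial (Fin 2) ℂ) = s * t ∧
      (e (Ideal.Quotient.mk _ (X 1)) : MvPolynomial (Fin 2) ℂ) = s ^ 4 ∧
      (e (Ideal.Quotient.mk _ (X 2)) : MvPolynomial (Fin 2) ℂ) = t ^ 4 := by
  intro s t A B
  refine ⟨As_le_Bs, frac_prop, integral_prop, Bs_integrallyClosed, eIso, ?_, ?_, ?_⟩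
  · rw [eIso_mk, phi0_X0]
  · rw [eIso_mk, phi0_X1]
  · rw [eIso_mk, phi0_X2]

end
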